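/- Let A and B be n×n nonnegative irreducible real matrices, and for t ∈ [0,1] let A^{(1−t)} ∘ B^{(t)} denote the n×n matrix with entries (A_{ij})^{1−t} (B_{ij})^{t}. Then for all t ∈ [0,1], r(A^{(1−t)} ∘ B^{(t)}) ≤ r(A)^{1−t} · r(B)^{t}. -/

import Mathlib

open Matrix

/-- Spectral radius of a real square matrix: the maximum modulus of its complex
eigenvalues. -/
noncomputable def specRad {n : ℕ} (A : Matrix (Fin n) (Fin n) ℝ) : ℝ :=
  sSup {x : ℝ | ∃ μ ∈ spectrum ℂ (A.map Complex.ofReal), x = ‖μ‖}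

/-- A nonnegative matrix is irreducible if for every pair (i,j) some power has a
positive (i,j) entry. -/
def MatIrred {n : ℕ} (A : Matrix (Fin n) (Fin n) ℝ) : Prop :=
  ∀ i j : Fin n, ∃ m : ℕ, 0 < m ∧ 0 < (A ^ m) i j

/-- For a real diagonal matrix D = diag d, `expDiag d` is diag (exp d). -/
noncomputable def expDiag {n : ℕ} (d : Fin n → ℝ) : Matrix (Fin n) (Fin n) ℝ :=
  Matrix.diagonal fun i => Real.exp (d i)

/-- Property 1: equality in the log-convexity inequality forces C - D to be scalar. -/
def Property1 {n : ℕ} (A : Matrix (Fin n) (Fin n) ℝ) : Prop :=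
  ∀ C D : Fin n → ℝ, ∀ t ∈ Set.Ioo (0:ℝ) 1,
    Real.log (specRad (expDiag (fun i => (1 - t) * C i + t * D i) * A)) =
      (1 - t) * Real.log (specRad (expDiag C * A)) +
        t * Real.log (specRad (expDiag D * A)) →
    ∃ c : ℝ, ∀ i, C i - D i = c

open Filter Finset Topology

section KingmanAux

/-- Hölder mixing inequality for sums. -/
lemma holder_mix {ι : Type*} (s : Finset ι) (f g : ι → ℝ) (hf : ∀ i, 0 ≤ f i)
    (hg : ∀ i, 0 ≤ g i) {t : ℝ} (ht : t ∈ Set.Ioo (0:ℝ) 1) :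
    ∑ i ∈ s, f i ^ (1 - t) * g i ^ t ≤ (∑ i ∈ s, f i) ^ (1 - t) * (∑ i ∈ s, g i) ^ t := by
  obtain ⟨ht0, ht1⟩ := ht
  have h1t : 0 < 1 - t := by linarith
  have hpq : ((1-t)⁻¹ : ℝ).HolderConjugate t⁻¹ := by
    constructor
    · simp [inv_inv]
    · exact inv_pos.2 h1t
    · exact inv_pos.2 ht0
  have key := Real.inner_le_Lp_mul_Lq_of_nonneg (s := s)
    (f := fun i => f i ^ (1-t)) (g := fun i => g i ^ t) hpq
    (fun i _ => Real.rpow_nonneg (hf i) _) (fun i _ => Real.rpow_nonneg (hg i) _)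
  have e1 : ∀ i, (f i ^ (1-t)) ^ ((1-t)⁻¹ : ℝ) = f i := fun i => by
    rw [← Real.rpow_mul (hf i), mul_inv_cancel₀ h1t.ne', Real.rpow_one]
  have e2 : ∀ i, (g i ^ t) ^ (t⁻¹ : ℝ) = g i := fun i => by
    rw [← Real.rpow_mul (hg i), mul_inv_cancel₀ ht0.ne', Real.rpow_one]
  simpa [e1, e2, one_div, inv_inv] using key

attribute [local instance] Matrix.linftyOpNormedRing Matrix.linftyOpNormedAlgebra

variable {n : ℕ}

local instance : CompleteSpace (Matrix (Fin n) (Fin n) ℂ) := FiniteDimensional.complete ℂ _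

lemma pow_entry_nonneg {A : Matrix (Fin n) (Fin n) ℝ} (hA : ∀ i j, 0 ≤ A i j) :
    ∀ (m : ℕ) (i j), 0 ≤ (A ^ m) i j := by
  intro m
  induction m with
  | zero => intro i j; rw [pow_zero, Matrix.one_apply]; positivity
  | succ m ih =>
    intro i j
    rw [pow_succ, Matrix.mul_apply]
    exact Finset.sum_nonneg fun k _ => mul_nonneg (ih i k) (hA k j)

lemma rowSum_coe {P : Matrix (Fin n) (Fin n) ℝ} (hP : ∀ i j, 0 ≤ P i j) (i : Fin n) :
    ((∑ j, ‖(P.map Complex.ofReal) i j‖₊ : NNReal) : ℝ) = ∑ j, P i j := by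
  push_cast [coe_nnnorm, Matrix.map_apply, Complex.norm_real, Real.norm_eq_abs]
  exact Finset.sum_congr rfl fun j _ => abs_of_nonneg (hP i j)

lemma rowSum_le_norm {P : Matrix (Fin n) (Fin n) ℝ} (hP : ∀ i j, 0 ≤ P i j) (i : Fin n) :
    ∑ j, P i j ≤ ‖P.map Complex.ofReal‖ := by
  calc ∑ j, P i j = ((∑ j, ‖(P.map Complex.ofReal) i j‖₊ : NNReal) : ℝ) := (rowSum_coe hP i).symm
    _ ≤ ((Finset.univ.sup fun i => ∑ j, ‖(P.map Complex.ofReal) i j‖₊ : NNReal) : ℝ) :=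
        NNReal.coe_le_coe.2 (Finset.le_sup (f := fun i => ∑ j, ‖(P.map Complex.ofReal) i j‖₊)
          (Finset.mem_univ i))
    _ = ‖P.map Complex.ofReal‖ := (Matrix.linfty_opNorm_def _).symm

lemma norm_le_of_rowSum {P : Matrix (Fin n) (Fin n) ℝ} (hP : ∀ i j, 0 ≤ P i j) {c : ℝ}
    (hc : 0 ≤ c) (h : ∀ i, ∑ j, P i j ≤ c) : ‖P.map Complex.ofReal‖ ≤ c := by
  rw [Matrix.linfty_opNorm_def]
  have key : (Finset.univ.sup fun i => ∑ j, ‖(P.map Complex.ofReal) i j‖₊) ≤ c.toNNReal := by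
    refine Finset.sup_le fun i _ => ?_
    rw [← NNReal.coe_le_coe, Real.coe_toNNReal _ hc, rowSum_coe hP i]
    exact h i
  calc ((Finset.univ.sup fun i => ∑ j, ‖(P.map Complex.ofReal) i j‖₊ : NNReal) : ℝ)
      ≤ (c.toNNReal : ℝ) := NNReal.coe_le_coe.2 key
    _ = c := Real.coe_toNNReal _ hc

lemma entry_pow_le {A B : Matrix (Fin n) (Fin n) ℝ} (hA : ∀ i j, 0 ≤ A i j)
    (hB : ∀ i j, 0 ≤ B i j) {t : ℝ} (ht : t ∈ Set.Ioo (0:ℝ) 1) (m : ℕ) (i j : Fin n) :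
    ((Matrix.of fun i j => A i j ^ (1 - t) * B i j ^ t) ^ m) i j ≤
      ((A ^ m) i j) ^ (1 - t) * ((B ^ m) i j) ^ t := by
  obtain ⟨ht0, ht1⟩ := ht
  have h1t : 0 < 1 - t := by linarith
  set C : Matrix (Fin n) (Fin n) ℝ := Matrix.of fun i j => A i j ^ (1 - t) * B i j ^ t with hC
  induction m generalizing i j with
  | zero =>
    rw [pow_zero, pow_zero, pow_zero]
    by_cases h : i = j
    · subst h; simp [Matrix.one_apply_eq, Real.one_rpow]
    · simp [Matrix.one_apply_ne h, Real.zero_rpow h1t.ne', Real.zero_rpow ht0.ne']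
  | succ m ih =>
    rw [pow_succ, pow_succ, pow_succ, Matrix.mul_apply]
    calc ∑ k, (C ^ m) i k * C k j
        ≤ ∑ k, ((A ^ m) i k * A k j) ^ (1 - t) * ((B ^ m) i k * B k j) ^ t := by
          refine Finset.sum_le_sum fun k _ => ?_
          have hckj : C k j = A k j ^ (1 - t) * B k j ^ t := rfl
          have step : (C ^ m) i k * C k j ≤
              (((A ^ m) i k) ^ (1 - t) * ((B ^ m) i k) ^ t) * (A k j ^ (1 - t) * B k j ^ t) := by
            rw [hckj]
            exact mul_le_mul_of_nonneg_right (ih i k)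
              (mul_nonneg (Real.rpow_nonneg (hA k j) _) (Real.rpow_nonneg (hB k j) _))
          refine step.trans (le_of_eq ?_)
          rw [Real.mul_rpow (pow_entry_nonneg hA m i k) (hA k j),
            Real.mul_rpow (pow_entry_nonneg hB m i k) (hB k j)]
          ring
      _ ≤ (∑ k, (A ^ m) i k * A k j) ^ (1 - t) * (∑ k, (B ^ m) i k * B k j) ^ t := by
          refine holder_mix _ _ _ (fun k => mul_nonneg (pow_entry_nonneg hA m i k) (hA k j))
            (fun k => mul_nonneg (pow_entry_nonneg hB m i k) (hB k j)) ⟨ht0, ht1⟩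
      _ = ((A ^ m * A) i j) ^ (1 - t) * ((B ^ m * B) i j) ^ t := by
          rw [Matrix.mul_apply, Matrix.mul_apply]

lemma map_ofReal_pow (M : Matrix (Fin n) (Fin n) ℝ) (m : ℕ) :
    (M.map Complex.ofReal) ^ m = (M ^ m).map Complex.ofReal := by
  have h : ∀ (P : Matrix (Fin n) (Fin n) ℝ),
      P.map Complex.ofReal = Complex.ofRealHom.mapMatrix P := fun P => rfl
  rw [h, h, ← map_pow]

lemma specRad_eq_toReal [NeZero n] (M : Matrix (Fin n) (Fin n) ℝ) :
    specRad M = (spectralRadius ℂ (M.map Complex.ofReal)).toReal := by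
  obtain ⟨μ0, hμ0, hr⟩ := spectrum.exists_nnnorm_eq_spectralRadius (a := M.map Complex.ofReal)
  have hgreat : IsGreatest {x : ℝ | ∃ μ ∈ spectrum ℂ (M.map Complex.ofReal), x = ‖μ‖}
      ‖μ0‖ := by
    constructor
    · exact ⟨μ0, hμ0, rfl⟩
    · rintro x ⟨μ, hμ, rfl⟩
      have h1 : (‖μ‖₊ : ENNReal) ≤ spectralRadius ℂ (M.map Complex.ofReal) :=
        le_iSup₂ (f := fun k (_ : k ∈ spectrum ℂ (M.map Complex.ofReal)) => (‖k‖₊ : ENNReal)) μ hμ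
      rw [← hr, ENNReal.coe_le_coe] at h1
      calc ‖μ‖ = ‖μ‖ := rfl
        _ ≤ ‖μ0‖ := h1
  rw [specRad, hgreat.csSup_eq, ← hr]
  simp

lemma tendsto_gelfand (M : Matrix (Fin n) (Fin n) ℝ) :
    Tendsto (fun m : ℕ => ‖(M.map Complex.ofReal) ^ m‖ ^ ((1 : ℝ)/m)) atTop
      (𝓝 (spectralRadius ℂ (M.map Complex.ofReal)).toReal) := by
  have hfin : spectralRadius ℂ (M.map Complex.ofReal) ≠ ⊤ := by
    by_cases hn : Nonempty (Fin n)
    · exact ((spectrum.spectralRadius_le_nnnorm (𝕜 := ℂ) _).trans_lt ENNReal.coe_lt_top).ne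
    · have hspec : spectrum ℂ (M.map Complex.ofReal) = ∅ := by
        ext z
        simp only [Set.mem_empty_iff_false, iff_false, spectrum.mem_iff, not_not]
        have : Subsingleton (Matrix (Fin n) (Fin n) ℂ) :=
          ⟨fun P Q => by ext i j; exact absurd ⟨i⟩ hn⟩
        exact isUnit_of_subsingleton _
      rw [spectralRadius, hspec]
      simp
  have h := spectrum.pow_norm_pow_one_div_tendsto_nhds_spectralRadius (M.map Complex.ofReal)
  have h2 := (ENNReal.tendsto_toReal hfin).comp h
  refine h2.congr fun m => ?_
  simp only [Function.comp_apply]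
  rw [ENNReal.toReal_ofReal (Real.rpow_nonneg (norm_nonneg _) _)]

lemma specRad_zero_dim (M : Matrix (Fin 0) (Fin 0) ℝ) : specRad M = 0 := by
  have hspec : spectrum ℂ (M.map Complex.ofReal) = ∅ := by
    ext z
    simp only [Set.mem_empty_iff_false, iff_false, spectrum.mem_iff, not_not]
    have : Subsingleton (Matrix (Fin 0) (Fin 0) ℂ) := ⟨fun P Q => by ext i j; exact i.elim0⟩
    exact isUnit_of_subsingleton _
  have : {x : ℝ | ∃ μ ∈ spectrum ℂ (M.map Complex.ofReal), x = ‖μ‖} = ∅ := by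
    rw [hspec]; simp
  rw [specRad, this, Real.sSup_empty]

theorem stmt2 {n : ℕ} (A B : Matrix (Fin n) (Fin n) ℝ)
    (hA : ∀ i j, 0 ≤ A i j) (hB : ∀ i j, 0 ≤ B i j)
    (hAirr : MatIrred A) (hBirr : MatIrred B)
    (t : ℝ) (ht : t ∈ Set.Icc (0:ℝ) 1) :
    specRad (Matrix.of fun i j => A i j ^ (1 - t) * B i j ^ t) ≤
      specRad A ^ (1 - t) * specRad B ^ t := by
  obtain ⟨ht0, ht1⟩ := ht
  rcases eq_or_lt_of_le ht0 with h0 | h0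
  · -- t = 0
    have hCA : (Matrix.of fun i j => A i j ^ (1 - t) * B i j ^ t) = A := by
      ext i j
      rw [Matrix.of_apply, ← h0]
      simp [Real.rpow_one]
    rw [hCA, ← h0]
    simp [Real.rpow_one]
  rcases eq_or_lt_of_le ht1 with h1 | h1
  · -- t = 1
    have hCB : (Matrix.of fun i j => A i j ^ (1 - t) * B i j ^ t) = B := by
      ext i j
      rw [Matrix.of_apply, h1]
      simp [Real.rpow_one]
    rw [hCB, h1]
    simp [Real.rpow_one]
  -- interior case
  have h1t : 0 < 1 - t := by linarith
  set C : Matrix (Fin n) (Fin n) ℝ := Matrix.of fun i j => A i j ^ (1 - t) * B i j ^ t with hCdef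
  have hC : ∀ i j, 0 ≤ C i j := fun i j =>
    mul_nonneg (Real.rpow_nonneg (hA i j) _) (Real.rpow_nonneg (hB i j) _)
  rcases Nat.eq_zero_or_pos n with hn | hn
  · subst hn
    rw [specRad_zero_dim, specRad_zero_dim, specRad_zero_dim]
    rw [Real.zero_rpow h1t.ne', zero_mul]
  haveI : NeZero n := ⟨hn.ne'⟩
  have key : ∀ m : ℕ,
      ‖(C.map Complex.ofReal) ^ m‖ ^ ((1:ℝ)/m) ≤
        (‖(A.map Complex.ofReal) ^ m‖ ^ ((1:ℝ)/m)) ^ (1 - t) *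
          (‖(B.map Complex.ofReal) ^ m‖ ^ ((1:ℝ)/m)) ^ t := by
    intro m
    have hnormA : (0:ℝ) ≤ ‖(A ^ m).map Complex.ofReal‖ := norm_nonneg _
    have hnormB : (0:ℝ) ≤ ‖(B ^ m).map Complex.ofReal‖ := norm_nonneg _
    have h1 : ‖(C.map Complex.ofReal) ^ m‖ ≤
        ‖(A.map Complex.ofReal) ^ m‖ ^ (1 - t) * ‖(B.map Complex.ofReal) ^ m‖ ^ t := by
      rw [map_ofReal_pow, map_ofReal_pow, map_ofReal_pow]
      refine norm_le_of_rowSum (pow_entry_nonneg hC m)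
        (mul_nonneg (Real.rpow_nonneg hnormA _) (Real.rpow_nonneg hnormB _)) fun i => ?_
      calc ∑ j, (C ^ m) i j
          ≤ ∑ j, ((A ^ m) i j) ^ (1 - t) * ((B ^ m) i j) ^ t :=
            Finset.sum_le_sum fun j _ => entry_pow_le hA hB ⟨h0, h1⟩ m i j
        _ ≤ (∑ j, (A ^ m) i j) ^ (1 - t) * (∑ j, (B ^ m) i j) ^ t :=
            holder_mix _ _ _ (fun j => pow_entry_nonneg hA m i j)
              (fun j => pow_entry_nonneg hB m i j) ⟨h0, h1⟩
        _ ≤ ‖(A ^ m).map Complex.ofReal‖ ^ (1 - t) * ‖(B ^ m).map Complex.ofReal‖ ^ t := by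
            refine mul_le_mul (Real.rpow_le_rpow
                (Finset.sum_nonneg fun j _ => pow_entry_nonneg hA m i j)
                (rowSum_le_norm (pow_entry_nonneg hA m) i) h1t.le)
              (Real.rpow_le_rpow (Finset.sum_nonneg fun j _ => pow_entry_nonneg hB m i j)
                (rowSum_le_norm (pow_entry_nonneg hB m) i) h0.le)
              (Real.rpow_nonneg (Finset.sum_nonneg fun j _ => pow_entry_nonneg hB m i j) _)
              (Real.rpow_nonneg hnormA _)
    have hm : (0:ℝ) ≤ 1/(m:ℝ) := by positivity
    calc ‖(C.map Complex.ofReal) ^ m‖ ^ ((1:ℝ)/m)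
        ≤ (‖(A.map Complex.ofReal) ^ m‖ ^ (1 - t) * ‖(B.map Complex.ofReal) ^ m‖ ^ t) ^
            ((1:ℝ)/m) := Real.rpow_le_rpow (norm_nonneg _) h1 hm
      _ = (‖(A.map Complex.ofReal) ^ m‖ ^ ((1:ℝ)/m)) ^ (1 - t) *
            (‖(B.map Complex.ofReal) ^ m‖ ^ ((1:ℝ)/m)) ^ t := by
          rw [Real.mul_rpow (Real.rpow_nonneg (norm_nonneg _) _)
              (Real.rpow_nonneg (norm_nonneg _) _),
            ← Real.rpow_mul (norm_nonneg _), ← Real.rpow_mul (norm_nonneg _),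
            mul_comm (1 - t) ((1:ℝ)/m), mul_comm t ((1:ℝ)/m),
            Real.rpow_mul (norm_nonneg _), Real.rpow_mul (norm_nonneg _)]
  have limC := tendsto_gelfand C
  have limA := tendsto_gelfand A
  have limB := tendsto_gelfand B
  have limRHS := (limA.rpow_const (Or.inr h1t.le)).mul (limB.rpow_const (Or.inr h0.le))
  rw [specRad_eq_toReal A, specRad_eq_toReal B, specRad_eq_toReal C]
  exact le_of_tendsto_of_tendsto' limC limRHS key

end KingmanAux
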